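/- Let α ∈ (0,1), 0 < a < T, and suppose (v, M) is a tube solution to the conformable fractional initial value problem u^(α)(t) = g(t,u(t)), u(a) = u_a, where g is continuous. Suppose u ∈ C^(α)([a,T]) satisfies u^(α)(t) + a^(-α) u(t) = g(t, ũ(t)) + a^(-α) ũ(t) with u(a) = u_a, where ũ is the radial truncation of u into the tube. Then |u(t) - v(t)| ≤ M(t) for all t ∈ [a,T], i.e., u lies in the tube T(v,M). -/

import Mathlib

open Filter Real Set

/-- The conformable fractional derivative of `f` of order `α` at `t`. -/
def HasConformableDerivAt (α : ℝ) (f : ℝ → ℝ) (t L : ℝ) : Prop :=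
  Tendsto (fun ε : ℝ => (f (t + ε * t ^ (1 - α)) - f t) / ε)
    (nhdsWithin 0 {(0 : ℝ)}ᶜ) (nhds L)

lemma conf_deriv {α : ℝ} {f : ℝ → ℝ} {t L : ℝ} (ht : 0 < t)
    (h : Tendsto (fun ε : ℝ => (f (t + ε * t ^ (1 - α)) - f t) / ε)
      (nhdsWithin 0 {(0 : ℝ)}ᶜ) (nhds L)) :
    HasDerivAt f (L * t ^ (α - 1)) t := by
  have hc : (0:ℝ) < t ^ (1 - α) := rpow_pos_of_pos ht _
  rw [hasDerivAt_iff_tendsto_slope]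
  have hmap : Tendsto (fun y : ℝ => (y - t) / t ^ (1 - α)) (nhdsWithin t {t}ᶜ)
      (nhdsWithin 0 {(0:ℝ)}ᶜ) := by
    rw [tendsto_nhdsWithin_iff]
    constructor
    · have : Tendsto (fun y : ℝ => (y - t) / t ^ (1 - α)) (nhds t) (nhds ((t - t) / t ^ (1 - α))) :=
        ((continuous_id.sub continuous_const).div_const _).tendsto t
      simpa using this.mono_left nhdsWithin_le_nhds
    · filter_upwards [self_mem_nhdsWithin] with y hy
      simp only [mem_compl_iff, mem_singleton_iff] at hy ⊢
      intro hcon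
      exact hy (by field_simp at hcon; linarith)
  have h2 : Tendsto (fun y : ℝ => slope f t y * t ^ (1 - α)) (nhdsWithin t {t}ᶜ) (nhds L) := by
    refine (h.comp hmap).congr (fun y => ?_)
    simp only [Function.comp]
    rw [div_mul_cancel₀ _ hc.ne']
    rw [slope_def_field, div_div_eq_mul_div]
    ring_nf
  have h3 := h2.mul_const (t ^ (1 - α))⁻¹
  have heq : L * (t ^ (1-α))⁻¹ = L * t ^ (α - 1) := by
    rw [← rpow_neg ht.le]; ring_nf
  rw [heq] at h3
  refine h3.congr (fun y => ?_)
  field_simp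

theorem stmt16 (α a T ua : ℝ) (hα : α ∈ Set.Ioo (0:ℝ) 1) (ha : 0 < a) (haT : a < T)
    (g : ℝ → ℝ → ℝ) (hg : Continuous fun p : ℝ × ℝ => g p.1 p.2)
    (v M v' M' : ℝ → ℝ)
    (hv : ∀ t ∈ Set.Icc a T, HasConformableDerivAt α v t (v' t))
    (hv' : ContinuousOn v' (Set.Icc a T))
    (hM : ∀ t ∈ Set.Icc a T, HasConformableDerivAt α M t (M' t))
    (hM' : ContinuousOn M' (Set.Icc a T))
    (hMnn : ∀ t ∈ Set.Icc a T, 0 ≤ M t)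
    (tube1 : ∀ t ∈ Set.Icc a T, ∀ y : ℝ, |y - v t| = M t →
      (y - v t) * (g t y - v' t) ≤ M t * M' t)
    (tube2 : ∀ t ∈ Set.Icc a T, M t = 0 → v' t = g t (v t) ∧ M' t = 0)
    (tube3 : |ua - v a| ≤ M a)
    (u u' ut : ℝ → ℝ)
    (hut : ut = fun t =>
      if M t < |u t - v t| then v t + M t * (u t - v t) / |u t - v t| else u t)
    (hu : ∀ t ∈ Set.Icc a T, HasConformableDerivAt α u t (u' t))
    (hu' : ContinuousOn u' (Set.Icc a T))
    (hode : ∀ t ∈ Set.Icc a T, u' t + a ^ (-α) * u t = g t (ut t) + a ^ (-α) * ut t)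
    (hua : u a = ua) :
    ∀ t ∈ Set.Icc a T, |u t - v t| ≤ M t := by
  -- positivity facts
  have hpos : ∀ t ∈ Set.Icc a T, (0:ℝ) < t := fun t ht => lt_of_lt_of_le ha ht.1
  -- ordinary derivatives
  have hud : ∀ t ∈ Set.Icc a T, HasDerivAt u (u' t * t ^ (α - 1)) t :=
    fun t ht => conf_deriv (hpos t ht) (hu t ht)
  have hvd : ∀ t ∈ Set.Icc a T, HasDerivAt v (v' t * t ^ (α - 1)) t :=
    fun t ht => conf_deriv (hpos t ht) (hv t ht)
  have hMd : ∀ t ∈ Set.Icc a T, HasDerivAt M (M' t * t ^ (α - 1)) t :=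
    fun t ht => conf_deriv (hpos t ht) (hM t ht)
  set w : ℝ → ℝ := fun t => |u t - v t| - M t with hw
  have hwc : ∀ t ∈ Set.Icc a T, ContinuousAt w t := fun t ht =>
    (((hud t ht).continuousAt.sub (hvd t ht).continuousAt).abs).sub (hMd t ht).continuousAt
  -- suppose not
  by_contra hcon
  push_neg at hcon
  obtain ⟨t0, ht0, ht0w⟩ := hcon
  have hwt0 : 0 < w t0 := by simp only [hw]; linarith
  -- the set S
  set S : Set ℝ := Icc a t0 ∩ w ⁻¹' (Iic 0) with hS
  have haS : a ∈ S := by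
    constructor
    · exact ⟨le_refl a, ht0.1⟩
    · simp only [mem_preimage, mem_Iic, hw, hua]; linarith
  have hSsub : S ⊆ Icc a t0 := inter_subset_left
  have hBdd : BddAbove S := bddAbove_Icc.mono hSsub
  have hScl : IsClosed S := by
    refine ContinuousOn.preimage_isClosed_of_isClosed ?_ isClosed_Icc isClosed_Iic
    intro x hx
    exact (hwc x ⟨hx.1, hx.2.trans ht0.2⟩).continuousWithinAt
  set s := sSup S with hs
  have hsS : s ∈ S := hScl.csSup_mem ⟨a, haS⟩ hBdd
  have hsws : w s ≤ 0 := hsS.2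
  have hst0 : s < t0 := lt_of_le_of_ne hsS.1.2 (fun h => by rw [h] at hsws; linarith)
  have hsa : a ≤ s := hsS.1.1
  -- w > 0 on Ioc s t0
  have hwpos : ∀ x ∈ Ioc s t0, 0 < w x := by
    intro x hx
    by_contra hc
    push_neg at hc
    have : x ∈ S := ⟨⟨hsa.trans hx.1.le, hx.2⟩, hc⟩
    exact absurd (le_csSup hBdd this) (not_le.2 hx.1)
  -- key derivative estimate
  have key : ∀ x ∈ Ioc s t0, ∃ d, HasDerivAt w d x ∧ d < 0 := by
    intro x hx
    have hxI : x ∈ Icc a T := ⟨hsa.trans hx.1.le, hx.2.trans ht0.2⟩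
    have hwx : 0 < w x := hwpos x hx
    have hMx : 0 ≤ M x := hMnn x hxI
    have hr : M x < |u x - v x| := by simp only [hw] at hwx; linarith
    have hrpos : 0 < |u x - v x| := lt_of_le_of_lt hMx hr
    have hne : u x - v x ≠ 0 := fun h => by rw [h] at hrpos; simp at hrpos
    set σ : ℝ := (u x - v x) / |u x - v x| with hσ
    have hσsq : σ * σ = 1 := by
      rw [hσ, div_mul_div_comm, ← abs_mul_abs_self, div_self (by positivity)]
    have hσr : σ * |u x - v x| = u x - v x := by
      rw [hσ]; field_simp
    -- derivative of |u - v| at x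
    have habs : HasDerivAt (fun y => |u y - v y|) (σ * ((u' x - v' x) * x ^ (α - 1))) x := by
      have hsub : HasDerivAt (fun y => u y - v y) ((u' x - v' x) * x ^ (α - 1)) x := by
        have := (hud x hxI).sub (hvd x hxI)
        exact this.congr_deriv (by ring)
      rcases lt_or_gt_of_ne hne with hlt | hgt
      · -- u x - v x < 0, σ = -1
        have hσval : σ = -1 := by
          rw [hσ, abs_of_neg hlt, div_eq_iff (by linarith)]; ring
        have hev : ∀ᶠ y in nhds x, u y - v y < 0 :=
          (hsub.continuousAt).eventually (eventually_lt_nhds hlt)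
        have heq : (fun y => |u y - v y|) =ᶠ[nhds x] (fun y => -(u y - v y)) := by
          filter_upwards [hev] with y hy using abs_of_neg hy
        rw [hσval]
        have := hsub.neg
        refine HasDerivAt.congr_of_eventuallyEq ?_ heq
        exact this.congr_deriv (by ring)
      · have hσval : σ = 1 := by
          rw [hσ, abs_of_pos hgt]; field_simp
        have hev : ∀ᶠ y in nhds x, 0 < u y - v y :=
          (hsub.continuousAt).eventually (eventually_gt_nhds hgt)
        have heq : (fun y => |u y - v y|) =ᶠ[nhds x] (fun y => u y - v y) := by
          filter_upwards [hev] with y hy using abs_of_pos hy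
        rw [hσval]
        refine HasDerivAt.congr_of_eventuallyEq ?_ heq
        exact hsub.congr_deriv (by ring)
    have hwd : HasDerivAt w ((σ * (u' x - v' x) - M' x) * x ^ (α - 1)) x := by
      have := habs.sub (hMd x hxI)
      exact this.congr_deriv (by ring)
    refine ⟨_, hwd, ?_⟩
    -- bound σ (u' - v') - M' ≤ -a^{-α} w x < 0
    have hxpos : 0 < x := hpos x hxI
    have hxα : 0 < x ^ (α - 1) := rpow_pos_of_pos hxpos _
    have haα : 0 < a ^ (-α) := rpow_pos_of_pos ha _
    -- truncation value
    have hutx : ut x = v x + M x * σ := by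
      rw [hut]; simp only [if_pos hr]; rw [hσ]; ring
    -- ODE
    have hodex : u' x = g x (ut x) + a ^ (-α) * (ut x - u x) := by
      have := hode x hxI; linarith
    -- tube estimate: σ * (g x (ut x) - v' x) ≤ M' x
    have htube : σ * (g x (ut x) - v' x) ≤ M' x := by
      rcases eq_or_lt_of_le hMx with hM0 | hM0
      · obtain ⟨h1, h2⟩ := tube2 x hxI (hM0.symm)
        rw [hutx, ← hM0, h2]
        simp [← hM0, ← h1]
      · have habs' : |ut x - v x| = M x := by
          rw [hutx]
          have : |σ| = 1 := by
            rw [hσ, abs_div, abs_abs, div_self (by positivity)]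
          rw [add_sub_cancel_left, abs_mul, this, abs_of_pos hM0, mul_one]
        have h1 := tube1 x hxI (ut x) habs'
        have h2 : ut x - v x = M x * σ := by rw [hutx]; ring
        rw [h2] at h1
        nlinarith [h1, hM0]
    have hσuv : σ * (u x - v x) = |u x - v x| := by
      have habs2 : (u x - v x) * (u x - v x) = |u x - v x| * |u x - v x| :=
        (abs_mul_abs_self _).symm
      rw [hσ, div_mul_eq_mul_div, habs2, mul_div_assoc, div_self (ne_of_gt hrpos), mul_one]
    have hwxdef : w x = |u x - v x| - M x := rfl
    have h5 : σ * (u' x - v' x) = σ * (g x (ut x) - v' x) + a ^ (-α) * (σ * (ut x - u x)) := by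
      rw [hodex]; ring
    have h6 : σ * (ut x - u x) = M x - |u x - v x| := by
      have h7 : σ * (ut x - u x) = M x * (σ * σ) - σ * (u x - v x) := by
        rw [hutx]; ring
      rw [h7, hσsq, hσuv]; ring
    have h8 : a ^ (-α) * (M x - |u x - v x|) = -(a ^ (-α) * w x) := by
      rw [hwxdef]; ring
    have hbound : σ * (u' x - v' x) - M' x < 0 := by
      have h9 : 0 < a ^ (-α) * w x := mul_pos haα hwx
      rw [h6, h8] at h5
      linarith
    exact mul_neg_of_neg_of_pos hbound hxα
  -- w is strictly decreasing on [s, t0], contradiction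
  have hanti : StrictAntiOn w (Icc s t0) := by
    refine strictAntiOn_of_deriv_neg (convex_Icc s t0) ?_ ?_
    · intro x hx
      exact (hwc x ⟨hsa.trans hx.1, hx.2.trans ht0.2⟩).continuousWithinAt
    · intro x hx
      rw [interior_Icc] at hx
      obtain ⟨d, hd, hdneg⟩ := key x ⟨hx.1, hx.2.le⟩
      rw [hd.deriv]; exact hdneg
  have := hanti (left_mem_Icc.2 hst0.le) (right_mem_Icc.2 hst0.le) hst0
  linarith
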